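/- Let T > k ≥ 1 be integers. Let V̂_ε be a T×T diagonal matrix with positive diagonal entries and V̂_y a T×T real symmetric matrix. Let 1+γ̂_1 ≥ ... ≥ 1+γ̂_T be the eigenvalues (with multiplicity) of A := V̂_ε^{-1/2} V̂_y V̂_ε^{-1/2}, assume γ̂_j > 0 for j = 1,...,k, let Û be a T×k matrix of orthonormal eigenvectors of A for the k largest eigenvalues, set Γ̂ = diag(γ̂_1,...,γ̂_k) and F̂ = V̂_ε^{1/2} Û Γ̂^{1/2}. Assume additionally that the diagonal entries of V̂_y equal the corresponding diagonal entries of F̂F̂' + V̂_ε. Then every diagonal entry of Ŝ := V̂_ε^{-1/2} M_{F̂,V̂_ε} (V̂_y − V̂_ε) M_{F̂,V̂_ε}' V̂_ε^{-1/2} is zero. -/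

import Mathlib

open Matrix Polynomial

noncomputable section

theorem statement2 (T k : ℕ) (hk : 1 ≤ k) (hkT : k < T)
    (d : Fin T → ℝ) (hd : ∀ t, 0 < d t)
    (Vy : Matrix (Fin T) (Fin T) ℝ) (hVy : Vyᵀ = Vy)
    (γ : Fin T → ℝ) (hγ : Antitone γ)
    (hγpos : ∀ j : Fin T, (j : ℕ) < k → 0 < γ j)
    (A : Matrix (Fin T) (Fin T) ℝ)
    (hA : A = (Matrix.diagonal fun t => (Real.sqrt (d t))⁻¹) * Vy *
        (Matrix.diagonal fun t => (Real.sqrt (d t))⁻¹))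
    (heig : A.charpoly = ∏ j : Fin T, (X - C (1 + γ j)))
    (U : Matrix (Fin T) (Fin k) ℝ)
    (hUorth : Uᵀ * U = 1)
    (hUeig : ∀ j : Fin k,
        A.mulVec (fun t => U t j) = (1 + γ (Fin.castLE hkT.le j)) • (fun t => U t j))
    (F : Matrix (Fin T) (Fin k) ℝ)
    (hF : F = (Matrix.diagonal fun t => Real.sqrt (d t)) * U *
        Matrix.diagonal (fun j : Fin k => Real.sqrt (γ (Fin.castLE hkT.le j))))
    (M : Matrix (Fin T) (Fin T) ℝ)
    (hM : M = 1 - F * (Fᵀ * (Matrix.diagonal d)⁻¹ * F)⁻¹ * Fᵀ * (Matrix.diagonal d)⁻¹)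
    (hdiag : ∀ t : Fin T, Vy t t = (F * Fᵀ + Matrix.diagonal d) t t)
    (S : Matrix (Fin T) (Fin T) ℝ)
    (hS : S = (Matrix.diagonal fun t => (Real.sqrt (d t))⁻¹) * M *
        (Vy - Matrix.diagonal d) * Mᵀ * (Matrix.diagonal fun t => (Real.sqrt (d t))⁻¹)) :
    ∀ t : Fin T, S t t = 0 := by
  have hd0 : ∀ t, Real.sqrt (d t) ≠ 0 := fun t => ne_of_gt (Real.sqrt_pos.mpr (hd t))
  have hγk : ∀ j : Fin k, 0 < γ (Fin.castLE hkT.le j) := fun j =>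
    hγpos _ (by simpa using j.isLt)
  -- helpers for diagonal matrices
  have diagEq : ∀ {n : Type} [DecidableEq n] (f : n → ℝ), (∀ i, f i = 1) →
      Matrix.diagonal f = 1 := by
    intro n _ f h
    rw [show f = fun _ => (1 : ℝ) from funext h, Matrix.diagonal_one]
  have diagCongr : ∀ {n : Type} [DecidableEq n] (f g : n → ℝ), (∀ i, f i = g i) →
      Matrix.diagonal f = Matrix.diagonal g := by
    intro n _ f g h
    rw [funext h]
  set Dh : Matrix (Fin T) (Fin T) ℝ := Matrix.diagonal fun t => Real.sqrt (d t) with hDh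
  set Dhi : Matrix (Fin T) (Fin T) ℝ :=
    Matrix.diagonal fun t => (Real.sqrt (d t))⁻¹ with hDhi
  set Γh : Matrix (Fin k) (Fin k) ℝ :=
    Matrix.diagonal fun j : Fin k => Real.sqrt (γ (Fin.castLE hkT.le j)) with hΓh
  set Γi : Matrix (Fin k) (Fin k) ℝ :=
    Matrix.diagonal fun j : Fin k => (γ (Fin.castLE hkT.le j))⁻¹ with hΓi
  set Γk : Matrix (Fin k) (Fin k) ℝ :=
    Matrix.diagonal fun j : Fin k => γ (Fin.castLE hkT.le j) with hΓk
  set Γ1 : Matrix (Fin k) (Fin k) ℝ :=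
    Matrix.diagonal fun j : Fin k => 1 + γ (Fin.castLE hkT.le j) with hΓ1
  have hDht : Dhᵀ = Dh := Matrix.diagonal_transpose _
  have hDhit : Dhiᵀ = Dhi := Matrix.diagonal_transpose _
  have hΓht : Γhᵀ = Γh := Matrix.diagonal_transpose _
  have hΓkt : Γkᵀ = Γk := Matrix.diagonal_transpose _
  have hDhDhi : Dh * Dhi = 1 := by
    rw [hDh, hDhi, Matrix.diagonal_mul_diagonal]
    exact diagEq _ fun t => mul_inv_cancel₀ (hd0 t)
  have hDhiDh : Dhi * Dh = 1 := by
    rw [hDh, hDhi, Matrix.diagonal_mul_diagonal]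
    exact diagEq _ fun t => inv_mul_cancel₀ (hd0 t)
  have hDD : Dh * Dh = Matrix.diagonal d := by
    rw [hDh, Matrix.diagonal_mul_diagonal]
    exact diagCongr _ _ fun t => Real.mul_self_sqrt (hd t).le
  have hDinv : (Matrix.diagonal d)⁻¹ = Dhi * Dhi := by
    apply Matrix.inv_eq_right_inv
    rw [← hDD, mul_assoc, ← mul_assoc Dh Dhi Dhi, hDhDhi, one_mul, hDhDhi]
  have hΓhΓh : Γh * Γh = Γk := by
    rw [hΓh, hΓk, Matrix.diagonal_mul_diagonal]
    exact diagCongr _ _ fun j => Real.mul_self_sqrt (hγk j).le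
  have hΓinv : Γk⁻¹ = Γi := by
    apply Matrix.inv_eq_right_inv
    rw [hΓk, hΓi, Matrix.diagonal_mul_diagonal]
    exact diagEq _ fun j => mul_inv_cancel₀ (ne_of_gt (hγk j))
  -- cancellation helpers (generic in the second dimension)
  have cDhDhi : ∀ {n : Type} (Z : Matrix (Fin T) n ℝ), Dh * (Dhi * Z) = Z := by
    intro n Z; rw [← Matrix.mul_assoc, hDhDhi, Matrix.one_mul]
  have cDhiDh : ∀ {n : Type} (Z : Matrix (Fin T) n ℝ), Dhi * (Dh * Z) = Z := by
    intro n Z; rw [← Matrix.mul_assoc, hDhiDh, Matrix.one_mul]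
  have cU : ∀ {n : Type} (Z : Matrix (Fin k) n ℝ), Uᵀ * (U * Z) = Z := by
    intro n Z; rw [← Matrix.mul_assoc, hUorth, Matrix.one_mul]
  have cΓ : ∀ {n : Type} (Z : Matrix (Fin k) n ℝ), Γh * (Γi * (Γh * Z)) = Z := by
    intro n Z
    rw [← Matrix.mul_assoc, ← Matrix.mul_assoc, hΓh, hΓi, Matrix.diagonal_mul_diagonal,
      Matrix.diagonal_mul_diagonal]
    have h1 : (Matrix.diagonal fun i : Fin k => Real.sqrt (γ (Fin.castLE hkT.le i)) *
        (γ (Fin.castLE hkT.le i))⁻¹ * Real.sqrt (γ (Fin.castLE hkT.le i))) =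
        (1 : Matrix (Fin k) (Fin k) ℝ) := by
      apply diagEq
      intro j
      rw [mul_comm (Real.sqrt _) _, mul_assoc, Real.mul_self_sqrt (hγk j).le,
        inv_mul_cancel₀ (ne_of_gt (hγk j))]
    rw [h1, Matrix.one_mul]
  have cΓhΓh : ∀ {n : Type} (Z : Matrix (Fin k) n ℝ), Γh * (Γh * Z) = Γk * Z := by
    intro n Z; rw [← Matrix.mul_assoc, hΓhΓh]
  -- F' D⁻¹ F = Γ
  have hFt : Fᵀ = Γh * (Uᵀ * Dh) := by
    rw [hF]; simp only [Matrix.transpose_mul, hDht, hΓht, Matrix.mul_assoc]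
  have hFDF : Fᵀ * (Matrix.diagonal d)⁻¹ * F = Γk := by
    rw [hFt, hF, hDinv]
    simp only [Matrix.mul_assoc]
    rw [cDhDhi, cDhiDh, cU]; exact hΓhΓh
  -- eigen relation in matrix form
  have hAU : A * U = U * Γ1 := by
    ext t j
    have h1 : (A * U) t j = ((1 + γ (Fin.castLE hkT.le j)) • (fun s => U s j)) t := by
      rw [← hUeig j]; rfl
    rw [h1, hΓ1, Matrix.mul_diagonal]
    simp [mul_comm]
  have hAsym : Aᵀ = A := by
    rw [hA]
    simp only [Matrix.transpose_mul, hDhit, hVy, Matrix.mul_assoc]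
  have hΓ1k : Γ1 = Γk + 1 := by
    rw [hΓ1, hΓk, ← Matrix.diagonal_one, Matrix.diagonal_add]
    exact diagCongr _ _ fun j => by show 1 + _ = _ + 1; ring
  have hBU : (A - 1) * U = U * Γk := by
    rw [Matrix.sub_mul, Matrix.one_mul, hAU, hΓ1k, Matrix.mul_add, Matrix.mul_one,
      add_sub_cancel_right]
  have hBsym : (A - 1)ᵀ = A - 1 := by
    rw [Matrix.transpose_sub, hAsym, Matrix.transpose_one]
  have hUB : Uᵀ * (A - 1) = Γk * Uᵀ := by
    have h2 := congrArg Matrix.transpose hBU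
    simp only [Matrix.transpose_mul, hBsym, hΓkt] at h2
    exact h2
  -- the whitened projector
  have hDM : Dhi * M = (1 - U * Uᵀ) * Dhi := by
    rw [hM, hFDF, hΓinv, hFt, hF, hDinv]
    simp only [Matrix.mul_sub, Matrix.sub_mul, Matrix.mul_one, Matrix.one_mul,
      Matrix.mul_assoc]
    rw [cDhiDh, cDhDhi, cΓ]
  have hMD : Mᵀ * Dhi = Dhi * (1 - U * Uᵀ) := by
    have h2 := congrArg Matrix.transpose hDM
    simp only [Matrix.transpose_mul, hDhit, Matrix.transpose_sub, Matrix.transpose_one,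
      Matrix.transpose_transpose] at h2
    exact h2
  have hB : Dhi * (Vy - Matrix.diagonal d) * Dhi = A - 1 := by
    rw [Matrix.mul_sub, Matrix.sub_mul, ← hA, ← hDD, ← Matrix.mul_assoc,
      Matrix.mul_assoc (Dhi * Dh), hDhiDh, Matrix.one_mul, hDhDhi]
  have cB : ∀ (Z : Matrix (Fin T) (Fin T) ℝ),
      Dhi * ((Vy - Matrix.diagonal d) * (Dhi * Z)) = (A - 1) * Z := by
    intro Z
    rw [← Matrix.mul_assoc (Vy - Matrix.diagonal d) Dhi Z, ← Matrix.mul_assoc,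
      ← Matrix.mul_assoc, hB]
  -- the key identity  S = (A - 1) - U Γ Uᵀ
  have hS2 : S = (A - 1) - U * (Γk * Uᵀ) := by
    have e1 : S = Dhi * (M * ((Vy - Matrix.diagonal d) * (Mᵀ * Dhi))) := by
      rw [hS]; simp only [Matrix.mul_assoc]
    rw [e1, hMD, ← Matrix.mul_assoc Dhi M, hDM, Matrix.mul_assoc, cB]
    -- goal : (1 - U*Uᵀ) * ((A - 1) * (1 - U*Uᵀ)) = ...
    have e2 : (A - 1) * (1 - U * Uᵀ) = (A - 1) - U * (Γk * Uᵀ) := by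
      rw [Matrix.mul_sub, Matrix.mul_one, ← Matrix.mul_assoc, hBU, Matrix.mul_assoc]
    rw [e2, Matrix.sub_mul, Matrix.one_mul, Matrix.mul_assoc, Matrix.mul_sub, hUB,
      cU, sub_self, Matrix.mul_zero, sub_zero]
  -- diagonal entries
  intro t
  have hFF : F * Fᵀ = Dh * ((U * (Γk * Uᵀ)) * Dh) := by
    rw [hFt, hF]
    simp only [Matrix.mul_assoc]
    rw [cΓhΓh]
  have hAt : A t t = (Real.sqrt (d t))⁻¹ * Vy t t * (Real.sqrt (d t))⁻¹ := by
    rw [hA, hDhi, Matrix.mul_diagonal, Matrix.diagonal_mul]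
  have hVyt : Vy t t = Real.sqrt (d t) * ((U * (Γk * Uᵀ)) t t * Real.sqrt (d t)) + d t := by
    have h3 := hdiag t
    rw [hFF] at h3
    rw [h3, Matrix.add_apply, Matrix.diagonal_apply_eq, hDh, Matrix.diagonal_mul,
      Matrix.mul_diagonal]
  have hs : Real.sqrt (d t) * Real.sqrt (d t) = d t := Real.mul_self_sqrt (hd t).le
  rw [hS2, Matrix.sub_apply, Matrix.sub_apply, Matrix.one_apply_eq, hAt, hVyt, ← hs]
  field_simp [hd0 t]
  ring_nf
  rw [Real.sqrt_sq (Real.sqrt_nonneg _), sub_self]
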